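/- Let M be a positive semidefinite complex d×d matrix with d ≥ 2, ε ≥ 0, and 0 ≤ η ≤ 1. Then there exist density matrices γ and Φ with D(γ,Φ) ≤ η such that tr(M·(γ − e^ε·Φ)) = η·λ_max(M) − (e^ε + η − 1)·λ_min(M). In particular, γ = η|ψ⟩⟨ψ| + (1−η)|φ⟩⟨φ| and Φ = |φ⟩⟨φ| work, where |ψ⟩ and |φ⟩ are orthonormal eigenvectors of M for the eigenvalues λ_max(M) and λ_min(M), respectively. -/

import Mathlib

open Matrix BigOperators
open scoped ComplexOrder

namespace QDP

variable {n : Type*} [Fintype n] [DecidableEq n]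

/-- The positive semidefinite square root, as `Matrix.PosSemidef.sqrt` was defined in older Mathlib. -/
noncomputable def PosSemidef.sqrt {A : Matrix n n ℂ} (hA : A.PosSemidef) : Matrix n n ℂ :=
  hA.1.eigenvectorUnitary.1 * diagonal ((↑) ∘ Real.sqrt ∘ hA.1.eigenvalues) *
  (star hA.1.eigenvectorUnitary : Matrix n n ℂ)

/-- Trace distance `D(ρ,σ) = (1/2) tr |ρ - σ|`, where `|A| = sqrt (Aᴴ A)`. -/
noncomputable def traceDist (ρ σ : Matrix n n ℂ) : ℝ :=
  (1 / 2 : ℝ) * ((PosSemidef.sqrt (Matrix.posSemidef_conjTranspose_mul_self (ρ - σ))).trace).re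

/-- A density matrix: positive semidefinite with trace one. -/
def IsDensity (ρ : Matrix n n ℂ) : Prop := ρ.PosSemidef ∧ ρ.trace = 1

/-- The largest eigenvalue of a (Hermitian) matrix. -/
noncomputable def lamMax (M : Matrix n n ℂ) : ℝ :=
  if h : M.IsHermitian then ⨆ i, h.eigenvalues i else 0

/-- The smallest eigenvalue of a (Hermitian) matrix. -/
noncomputable def lamMin (M : Matrix n n ℂ) : ℝ :=
  if h : M.IsHermitian then ⨅ i, h.eigenvalues i else 0

/-- Application of a quantum channel given by Kraus matrices. -/
noncomputable def applyChan {ι : Type*} [Fintype ι] (E : ι → Matrix n n ℂ)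
    (ρ : Matrix n n ℂ) : Matrix n n ℂ := ∑ j, E j * ρ * (E j)ᴴ

/-- The dual of a quantum channel given by Kraus matrices. -/
noncomputable def dualChan {ι : Type*} [Fintype ι] (E : ι → Matrix n n ℂ)
    (M : Matrix n n ℂ) : Matrix n n ℂ := ∑ j, (E j)ᴴ * M * E j

/-- `(ε,δ)`-differential privacy within `η` of the quantum algorithm `(E, M)`. -/
def IsDP {ι : Type*} [Fintype ι] {O : Type*} [Fintype O]
    (E : ι → Matrix n n ℂ) (M : O → Matrix n n ℂ) (ε δ η : ℝ) : Prop :=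
  ∀ ρ σ : Matrix n n ℂ, IsDensity ρ → IsDensity σ → traceDist ρ σ ≤ η →
    ∀ S : Finset O,
      (∑ k ∈ S, (M k * applyChan E ρ).trace).re ≤
        Real.exp ε * (∑ k ∈ S, (M k * applyChan E σ).trace).re + δ

/-- Rank-one projection `|ψ⟩⟨ψ|`. -/
noncomputable def proj (ψ : n → ℂ) : Matrix n n ℂ := vecMulVec ψ (star ψ)

end QDP

section Helpers

open QDP

set_option linter.unusedSectionVars false

variable {n : Type*} [Fintype n] [DecidableEq n]

private lemma vmv_mul_vmv (a b c e : n → ℂ) :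
    vecMulVec a b * vecMulVec c e = (b ⬝ᵥ c) • vecMulVec a e := by
  ext i j
  simp only [Matrix.mul_apply, vecMulVec_apply, Matrix.smul_apply, dotProduct, smul_eq_mul,
    Finset.sum_mul]
  exact Finset.sum_congr rfl fun k _ => by ring

private lemma mul_vmv (M : Matrix n n ℂ) (a b : n → ℂ) :
    M * vecMulVec a b = vecMulVec (M *ᵥ a) b := by
  ext i j
  simp only [Matrix.mul_apply, vecMulVec_apply, mulVec, dotProduct, Finset.sum_mul]
  exact Finset.sum_congr rfl fun k _ => by ring

private lemma vmv_smul_left (c : ℂ) (a b : n → ℂ) :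
    vecMulVec (c • a) b = c • vecMulVec a b := by
  ext i j; simp [vecMulVec_apply, mul_assoc]

private lemma trace_vmv (a b : n → ℂ) : (vecMulVec a b).trace = b ⬝ᵥ a := by
  simp [Matrix.trace, vecMulVec_apply, dotProduct, Matrix.diag, mul_comm]

private lemma conjT_vmv (a : n → ℂ) : (vecMulVec a (star a))ᴴ = vecMulVec a (star a) := by
  ext i j
  simp [vecMulVec_apply, conjTranspose_apply, mul_comm]

private lemma vmv_mulVec (a b x : n → ℂ) : vecMulVec a b *ᵥ x = (b ⬝ᵥ x) • a := by
  ext i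
  simp only [mulVec, dotProduct, vecMulVec_apply, Pi.smul_apply, smul_eq_mul, Finset.mul_sum]
  rw [Finset.sum_mul]
  exact Finset.sum_congr rfl fun k _ => by ring

private lemma psd_vmv (a : n → ℂ) : (vecMulVec a (star a)).PosSemidef := by
  refine .of_dotProduct_mulVec_nonneg (conjT_vmv a) fun x => ?_
  rw [vmv_mulVec, dotProduct_smul, smul_eq_mul]
  have h : star x ⬝ᵥ a = star (star a ⬝ᵥ x) := by
    simp only [dotProduct, star_sum, star_mul', star_star, Pi.star_apply]
    exact Finset.sum_congr rfl fun k _ => by ring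
  rw [h]
  exact mul_star_self_nonneg _

private lemma psd_smul' {A : Matrix n n ℂ} (hA : A.PosSemidef) {r : ℝ} (hr : 0 ≤ r) :
    ((r : ℂ) • A).PosSemidef := by
  refine .of_dotProduct_mulVec_nonneg ?_ fun x => ?_
  · unfold Matrix.IsHermitian
    rw [conjTranspose_smul, hA.1]
    simp
  · rw [smul_mulVec, dotProduct_smul, smul_eq_mul]
    exact mul_nonneg (Complex.zero_le_real.mpr hr) (hA.dotProduct_mulVec_nonneg x)

private lemma psd_add' {A B : Matrix n n ℂ} (hA : A.PosSemidef) (hB : B.PosSemidef) :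
    (A + B).PosSemidef := by
  refine .of_dotProduct_mulVec_nonneg ?_ fun x => ?_
  · unfold Matrix.IsHermitian
    rw [conjTranspose_add, hA.1, hB.1]
  · rw [add_mulVec, dotProduct_add]
    exact add_nonneg (hA.dotProduct_mulVec_nonneg x) (hB.dotProduct_mulVec_nonneg x)

end Helpers

section SqrtHelper

open scoped MatrixOrder

variable {n : Type*} [Fintype n] [DecidableEq n]

private lemma qdp_eq_sqrt_of_sq_eq {A B : Matrix n n ℂ} (hA : A.PosSemidef) (hB : B.PosSemidef)
    (h : B ^ 2 = A) : B = QDP.PosSemidef.sqrt hA := by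
  have h1 : QDP.PosSemidef.sqrt hA = cfc Real.sqrt A := by
    rw [hA.1.cfc_eq]
    simp [QDP.PosSemidef.sqrt, IsHermitian.cfc, Unitary.conjStarAlgAut_apply]
  have hA0 : 0 ≤ A := hA.nonneg
  have hB0 : 0 ≤ B := hB.nonneg
  rw [h1, ← cfcₙ_eq_cfc, ← CFC.sqrt_eq_real_sqrt A hA0]
  exact (CFC.sqrt_unique (by rw [← h, sq]) hB0).symm

end SqrtHelper

open QDP in
/-- The bound `η λ_max(M) - (e^ε + η - 1) λ_min(M)` is attained: in particular it is attained
at `γ = η|ψ⟩⟨ψ| + (1-η)|φ⟩⟨φ|` and `Φ = |φ⟩⟨φ|` for orthonormal eigenvectors `ψ, φ` of `M`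
corresponding to the extremal eigenvalues. -/
theorem trace_diff_bound_attained {d : ℕ} (hd : 2 ≤ d)
    (M : Matrix (Fin d) (Fin d) ℂ) (hM : M.PosSemidef)
    (ε η : ℝ) (hε : 0 ≤ ε) (hη0 : 0 ≤ η) (hη1 : η ≤ 1)
    (ψ φ : Fin d → ℂ) (hψ : star ψ ⬝ᵥ ψ = 1) (hφ : star φ ⬝ᵥ φ = 1)
    (horth : star ψ ⬝ᵥ φ = 0)
    (hψe : M *ᵥ ψ = ((lamMax M : ℝ) : ℂ) • ψ)
    (hφe : M *ᵥ φ = ((lamMin M : ℝ) : ℂ) • φ) :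
    (∃ γ Φ : Matrix (Fin d) (Fin d) ℂ, IsDensity γ ∧ IsDensity Φ ∧ traceDist γ Φ ≤ η ∧
      (M * (γ - ((Real.exp ε : ℝ) : ℂ) • Φ)).trace.re =
        η * lamMax M - (Real.exp ε + η - 1) * lamMin M) ∧
    IsDensity ((η : ℂ) • proj ψ + ((1 - η : ℝ) : ℂ) • proj φ) ∧
    IsDensity (proj φ) ∧
    traceDist ((η : ℂ) • proj ψ + ((1 - η : ℝ) : ℂ) • proj φ) (proj φ) ≤ η ∧
    (M * (((η : ℂ) • proj ψ + ((1 - η : ℝ) : ℂ) • proj φ) -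
        ((Real.exp ε : ℝ) : ℂ) • proj φ)).trace.re =
      η * lamMax M - (Real.exp ε + η - 1) * lamMin M := by
  set P : Matrix (Fin d) (Fin d) ℂ := proj ψ with hP
  set Q : Matrix (Fin d) (Fin d) ℂ := proj φ with hQ
  set γ : Matrix (Fin d) (Fin d) ℂ := (η : ℂ) • P + ((1 - η : ℝ) : ℂ) • Q with hγ
  have horth' : star φ ⬝ᵥ ψ = 0 := by
    have : star φ ⬝ᵥ ψ = star (star ψ ⬝ᵥ φ) := by
      simp only [dotProduct, star_sum, star_mul', star_star, Pi.star_apply]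
      exact Finset.sum_congr rfl fun k _ => by ring
    rw [this, horth, star_zero]
  have hPP : P * P = P := by
    rw [hP, proj, vmv_mul_vmv, hψ, one_smul]
  have hQQ : Q * Q = Q := by
    rw [hQ, proj, vmv_mul_vmv, hφ, one_smul]
  have hPQ : P * Q = 0 := by
    rw [hP, hQ, proj, proj, vmv_mul_vmv, horth, zero_smul]
  have hQP : Q * P = 0 := by
    rw [hP, hQ, proj, proj, vmv_mul_vmv, horth', zero_smul]
  have htrP : P.trace = 1 := by rw [hP, proj, trace_vmv, hψ]
  have htrQ : Q.trace = 1 := by rw [hQ, proj, trace_vmv, hφ]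
  have hPpsd : P.PosSemidef := psd_vmv ψ
  have hQpsd : Q.PosSemidef := psd_vmv φ
  -- densities
  have hγd : IsDensity γ := by
    constructor
    · exact psd_add' (psd_smul' hPpsd hη0) (psd_smul' hQpsd (by linarith))
    · rw [hγ, trace_add, trace_smul, trace_smul, htrP, htrQ]
      push_cast
      simp [smul_eq_mul]
  have hQd : IsDensity Q := ⟨hQpsd, htrQ⟩
  -- trace distance
  have hdiff : γ - Q = (η : ℂ) • (P - Q) := by
    rw [hγ]
    push_cast
    module
  have hdist : traceDist γ Q ≤ η := by
    have hB : ((η : ℂ) • (P + Q)).PosSemidef :=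
      psd_smul' (psd_add' hPpsd hQpsd) hη0
    have hsq : ((η : ℂ) • (P + Q)) ^ 2 = (γ - Q)ᴴ * (γ - Q) := by
      rw [hdiff]
      rw [conjTranspose_smul, conjTranspose_sub]
      rw [hPpsd.1.eq, hQpsd.1.eq]
      rw [sq, smul_mul_smul_comm, smul_mul_smul_comm]
      rw [add_mul, mul_add, mul_add, sub_mul, mul_sub, mul_sub]
      rw [hPP, hQQ, hPQ, hQP]
      congr 1
      · simp [Complex.star_def, Complex.conj_ofReal]
      · abel
    have hsqrt : (η : ℂ) • (P + Q) =
        QDP.PosSemidef.sqrt (Matrix.posSemidef_conjTranspose_mul_self (γ - Q)) :=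
      qdp_eq_sqrt_of_sq_eq _ hB hsq
    rw [traceDist, ← hsqrt, trace_smul, trace_add, htrP, htrQ]
    simp only [smul_eq_mul, Complex.ofReal_mul, mul_one, Complex.add_re, Complex.mul_re,
      Complex.ofReal_re, Complex.ofReal_im, Complex.one_re, Complex.one_im]
    linarith
  -- trace identity
  have hMP : M * P = ((lamMax M : ℝ) : ℂ) • P := by
    rw [hP, proj, mul_vmv, hψe, vmv_smul_left]
  have hMQ : M * Q = ((lamMin M : ℝ) : ℂ) • Q := by
    rw [hQ, proj, mul_vmv, hφe, vmv_smul_left]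
  have htr : (M * (γ - ((Real.exp ε : ℝ) : ℂ) • Q)).trace.re =
      η * lamMax M - (Real.exp ε + η - 1) * lamMin M := by
    have expand : M * (γ - ((Real.exp ε : ℝ) : ℂ) • Q) =
        (η : ℂ) • (M * P) + ((1 - η : ℝ) : ℂ) • (M * Q)
          - ((Real.exp ε : ℝ) : ℂ) • (M * Q) := by
      rw [hγ, mul_sub, mul_add, Matrix.mul_smul, Matrix.mul_smul, Matrix.mul_smul]
    have : (M * (γ - ((Real.exp ε : ℝ) : ℂ) • Q)).trace =
        ((η * lamMax M + (1 - η) * lamMin M - Real.exp ε * lamMin M : ℝ) : ℂ) := by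
      rw [expand, trace_sub, trace_add, trace_smul, trace_smul, trace_smul,
        hMP, hMQ, trace_smul, trace_smul, htrP, htrQ]
      simp only [smul_eq_mul, mul_one]
      push_cast
      ring
    rw [this, Complex.ofReal_re]
    ring
  exact ⟨⟨γ, Q, hγd, hQd, hdist, htr⟩, hγd, hQd, hdist, htr⟩
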